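/- For every odd n ≥ 3 and every integer D ≥ 1 there exists a stateless protocol on the bidirectional n-ring, with label complexity L_n = 2 + 3·⌈log₂ D⌉ (reaction functions ignore inputs and outputs), that implements a D-counter: under the synchronous schedule, for every initial labeling, after at most 4n time steps every node can read from its incoming labels an identical value c_t ∈ {0,1,…,D−1}, the same for all nodes at each time step t, and c_{t+1} ≡ c_t + 1 (mod D) for all such t. -/

import Mathlib

/-- A stateless protocol on the directed graph with node set `Fin n` and edge set
`E`, with label space `Λ`.  `react i` maps the current labeling (of which only
the values on `i`'s incoming edges may be used, per `react_local`) together with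
`i`'s input bit to a new labeling (of which only the values on `i`'s outgoing
edges are ever read) together with an output bit. -/
structure StatelessProtocol (n : ℕ) (E : Finset (Fin n × Fin n)) (Λ : Type) where
  react : Fin n → ({e // e ∈ E} → Λ) → Bool → ({e // e ∈ E} → Λ) × Bool
  react_local : ∀ (i : Fin n) (ℓ ℓ' : {e // e ∈ E} → Λ) (x : Bool),
      (∀ e : {e // e ∈ E}, e.1.2 = i → ℓ e = ℓ' e) → react i ℓ x = react i ℓ' x

namespace StatelessProtocol

variable {n : ℕ} {E : Finset (Fin n × Fin n)} {Λ : Type}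

/-- `run P x σ ℓ0 t` is the labeling after `t` time steps of the run of `P` on
input `x` from initial labeling `ℓ0`, where `σ t` is the set of nodes activated
at time step `t + 1`. -/
def run (P : StatelessProtocol n E Λ) (x : Fin n → Bool) (σ : ℕ → Finset (Fin n))
    (ℓ0 : {e // e ∈ E} → Λ) : ℕ → {e // e ∈ E} → Λ
  | 0 => ℓ0
  | t + 1 => fun e =>
      if e.1.1 ∈ σ t then (P.react e.1.1 (run P x σ ℓ0 t) (x e.1.1)).1 e
      else run P x σ ℓ0 t e

/-- A schedule is `r`-fair if every node is activated at least once in every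
window of `r` consecutive time steps. -/
def Fair (σ : ℕ → Finset (Fin n)) (r : ℕ) : Prop :=
  ∀ (i : Fin n) (t : ℕ), ∃ s, t ≤ s ∧ s < t + r ∧ i ∈ σ s

/-- A labeling is stable for input `x` if every reaction function is at a fixed
point: each node's prescribed outgoing labels coincide with the current ones. -/
def Stable (P : StatelessProtocol n E Λ) (x : Fin n → Bool)
    (ℓ : {e // e ∈ E} → Λ) : Prop :=
  ∀ e : {e // e ∈ E}, (P.react e.1.1 ℓ (x e.1.1)).1 e = ℓ e

/-- The labeling after `t` steps of the synchronous run (all nodes activated at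
every step). -/
def syncRun (P : StatelessProtocol n E Λ) (x : Fin n → Bool)
    (ℓ0 : {e // e ∈ E} → Λ) : ℕ → {e // e ∈ E} → Λ :=
  P.run x (fun _ => Finset.univ) ℓ0

/-- The outputs at time step `t` of the synchronous run (the value at time `0`
is a dummy value). -/
def syncOut (P : StatelessProtocol n E Λ) (x : Fin n → Bool)
    (ℓ0 : {e // e ∈ E} → Λ) : ℕ → Fin n → Bool
  | 0 => fun _ => false
  | t + 1 => fun i => (P.react i (P.syncRun x ℓ0 t) (x i)).2

/-- Output stabilization under the synchronous schedule. -/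
def OutputStabilizing (P : StatelessProtocol n E Λ) : Prop :=
  ∀ x ℓ0, ∃ T, ∀ t, T ≤ t → P.syncOut x ℓ0 t = P.syncOut x ℓ0 T

/-- Label stabilization under the synchronous schedule. -/
def LabelStabilizing (P : StatelessProtocol n E Λ) : Prop :=
  ∀ x ℓ0, ∃ T, ∀ t, T ≤ t → P.syncRun x ℓ0 t = P.syncRun x ℓ0 T

/-- `P` computes `f` if on every input and from every initial labeling, every
node's output sequence converges to `f x` under the synchronous schedule. -/
def Computes (P : StatelessProtocol n E Λ) (f : (Fin n → Bool) → Bool) : Prop :=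
  ∀ x ℓ0, ∃ T, ∀ t, T ≤ t → ∀ i, P.syncOut x ℓ0 t i = f x

end StatelessProtocol

/-- The complete directed graph on `Fin n`. -/
def Kn (n : ℕ) : Finset (Fin n × Fin n) :=
  Finset.univ.filter (fun p => p.1 ≠ p.2)

/-- The unidirectional `n`-ring: edges `(i, i + 1 mod n)`. -/
def uniRing (n : ℕ) : Finset (Fin n × Fin n) :=
  Finset.image (fun i : Fin n => (i, ⟨((i : ℕ) + 1) % n, Nat.mod_lt _ i.pos⟩)) Finset.univ

/-- The bidirectional `n`-ring: edges `(i, i ± 1 mod n)`. -/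
def biRing (n : ℕ) : Finset (Fin n × Fin n) :=
  uniRing n ∪ (uniRing n).image (fun p => (p.2, p.1))


set_option maxHeartbeats 1000000

namespace CtrProof

/-! ### Value encoding -/

variable {D : ℕ}

/-- capacity bound -/
lemma cap (hD : 1 ≤ D) : 2 * D ≤ 2 ^ (2 + 3 * Nat.clog 2 D) := by
  have h1 : D ≤ 2 ^ Nat.clog 2 D := Nat.le_pow_clog one_lt_two D
  have h2 : 2 ^ Nat.clog 2 D ≤ 2 ^ (3 * Nat.clog 2 D) :=
    Nat.pow_le_pow_right (by norm_num) (by omega)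
  have h3 : (0:ℕ) < 2 ^ (3 * Nat.clog 2 D) := Nat.pow_pos (by norm_num)
  calc 2 * D ≤ 2 * 2 ^ (3 * Nat.clog 2 D) := by omega
    _ ≤ 2 ^ (2 + 3 * Nat.clog 2 D) := by
        rw [pow_add]; nlinarith

abbrev Lab (D : ℕ) : Type := Fin (2 ^ (2 + 3 * Nat.clog 2 D))

def enc (D : ℕ) (z : ZMod (2 * D)) : Lab D :=
  ⟨z.val % 2 ^ (2 + 3 * Nat.clog 2 D), Nat.mod_lt _ (Nat.pow_pos (by norm_num))⟩

def dec (D : ℕ) (l : Lab D) : ZMod (2 * D) := ((l.val : ℕ) : ZMod (2 * D))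

lemma dec_enc (hD : 1 ≤ D) (z : ZMod (2 * D)) : dec D (enc D z) = z := by
  haveI : NeZero (2 * D) := ⟨by omega⟩
  have hv : z.val < 2 ^ (2 + 3 * Nat.clog 2 D) := lt_of_lt_of_le (ZMod.val_lt z) (cap hD)
  simp [dec, enc, Nat.mod_eq_of_lt hv, ZMod.natCast_val]

/-! ### The symmetric combiner -/

def gv (D : ℕ) (u v : ZMod (2 * D)) : ℕ :=
  (if 1 ≤ (u - v).val ∧ (u - v).val ≤ D - 1 then u.val else v.val) % D

def g (hD : 1 ≤ D) (u v : ZMod (2 * D)) : Fin D := ⟨gv D u v, Nat.mod_lt _ (by omega)⟩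

lemma val_mod_D (hD : 1 ≤ D) (x : ℕ) : x % (2 * D) % D = x % D :=
  Nat.mod_mod_of_dvd x ⟨2, by ring⟩

lemma g_symm (hD : 1 ≤ D) (u v : ZMod (2 * D)) : g hD u v = g hD v u := by
  haveI : NeZero (2 * D) := ⟨by omega⟩
  apply Fin.ext
  show gv D u v = gv D v u
  unfold gv
  rcases eq_or_ne u v with h | h
  · simp [h]
  · have hsub : u - v ≠ 0 := sub_ne_zero_of_ne h
    have hsub' : v - u ≠ 0 := sub_ne_zero_of_ne (Ne.symm h)
    have hneg : v - u = -(u - v) := by ring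
    have hval : (v - u).val = 2 * D - (u - v).val := by
      rw [hneg, ZMod.neg_val]; simp [hsub]
    have hlt : (u - v).val < 2 * D := ZMod.val_lt _
    have hpos : 1 ≤ (u - v).val := Nat.one_le_iff_ne_zero.mpr (fun h0 => hsub ((ZMod.val_eq_zero _).mp h0))
    rcases Nat.lt_trichotomy (u - v).val D with hlt1 | heq | hgt
    · -- (u-v).val ∈ [1, D-1] : both sides pick u
      rw [if_pos ⟨hpos, by omega⟩, if_neg (by omega)]
    · -- tie: u = v + D, u.val % D = v.val % D
      rw [if_neg (by omega), if_neg (by omega)]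
      -- u = v + (u - v), (u-v).val = D
      have : u = v + (u - v) := by ring
      rw [this, ZMod.val_add, heq, val_mod_D hD, Nat.add_mod_right]
    · rw [if_neg (by omega), if_pos ⟨by omega, by omega⟩]

lemma g_succ (hD : 1 ≤ D) (u v : ZMod (2 * D)) :
    (g hD (u + 1) (v + 1)).val = ((g hD u v).val + 1) % D := by
  haveI : NeZero (2 * D) := ⟨by omega⟩
  show gv D (u + 1) (v + 1) = (gv D u v + 1) % D
  have hd : (u + 1) - (v + 1) = u - v := by ring
  have hone : (1 : ZMod (2 * D)).val = 1 := by
    rcases Nat.lt_or_ge D 1 with h | h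
    · omega
    · exact ZMod.val_one_eq_one_mod (2*D) ▸ (Nat.mod_eq_of_lt (by omega))
  unfold gv
  rw [hd]
  split
  · rw [ZMod.val_add, hone, val_mod_D hD]
    exact ((Nat.mod_modEq u.val D).add_right 1).symm
  · rw [ZMod.val_add, hone, val_mod_D hD]
    exact ((Nat.mod_modEq v.val D).add_right 1).symm

/-! ### Ring edges -/

section Ring

variable {n : ℕ} [NeZero n]

lemma val_add_one (hn : 3 ≤ n) (i : Fin n) : (i + 1).val = (i.val + 1) % n := by
  rw [Fin.val_add, Fin.val_one', Nat.mod_eq_of_lt (show 1 < n by omega)]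

lemma mem_uni (hn : 3 ≤ n) (i : Fin n) : (i, i + 1) ∈ uniRing n := by
  refine Finset.mem_image.mpr ⟨i, Finset.mem_univ i, ?_⟩
  simp only [Prod.mk.injEq]
  exact ⟨trivial, Fin.ext (by rw [val_add_one hn])⟩

lemma mem_cw (hn : 3 ≤ n) (i : Fin n) : (i, i + 1) ∈ biRing n :=
  Finset.mem_union_left _ (mem_uni hn i)

lemma mem_ccw (hn : 3 ≤ n) (i : Fin n) : (i + 1, i) ∈ biRing n :=
  Finset.mem_union_right _ (Finset.mem_image.mpr ⟨(i, i + 1), mem_uni hn i, rfl⟩)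

/-- clockwise edge out of `i` -/
def eCW (hn : 3 ≤ n) (i : Fin n) : {e // e ∈ biRing n} := ⟨(i, i + 1), mem_cw hn i⟩

/-- counterclockwise edge into `i` (out of `i+1`) -/
def eCCW (hn : 3 ≤ n) (i : Fin n) : {e // e ∈ biRing n} := ⟨(i + 1, i), mem_ccw hn i⟩

lemma mk_add_one (hn : 3 ≤ n) (j : ℕ) (hj0 : j < n) (hj : j + 1 < n) :
    (⟨j, hj0⟩ : Fin n) + 1 = ⟨j + 1, hj⟩ := by
  apply Fin.ext
  rw [val_add_one hn]
  exact Nat.mod_eq_of_lt hj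

lemma mk_last_add_one (hn : 3 ≤ n) :
    (⟨n - 1, by omega⟩ : Fin n) + 1 = (0 : Fin n) := by
  apply Fin.ext
  rw [val_add_one hn]
  simp only [Fin.val_zero]
  have : n - 1 + 1 = n := by omega
  rw [this, Nat.mod_self]

lemma cw_ne_ccw (hn : 3 ≤ n) (i : Fin n) : i + 1 ≠ i - 1 := by
  intro h
  have h2 : i + 1 + 1 = i := by rw [h, sub_add_cancel]
  have hv := congrArg Fin.val h2
  rw [val_add_one hn, val_add_one hn] at hv
  have hlt := i.isLt
  by_cases hc : i.val + 1 = n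
  · have e1 : (i.val + 1) % n = 0 := by rw [hc, Nat.mod_self]
    rw [e1, Nat.mod_eq_of_lt (show 0 + 1 < n by omega)] at hv
    omega
  · have e1 : (i.val + 1) % n = i.val + 1 := Nat.mod_eq_of_lt (by omega)
    rw [e1] at hv
    by_cases hc2 : i.val + 1 + 1 = n
    · have e2 : (i.val + 1 + 1) % n = 0 := by rw [hc2, Nat.mod_self]
      rw [e2] at hv
      omega
    · rw [Nat.mod_eq_of_lt (show i.val + 1 + 1 < n by omega)] at hv
      omega

lemma mk_ne_zero (hn : 3 ≤ n) (j : ℕ) (hj : j < n) (h0 : j ≠ 0) :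
    (⟨j, hj⟩ : Fin n) ≠ 0 := by
  intro h
  have := congrArg Fin.val h
  simp only [Fin.val_zero] at this
  exact h0 this

lemma mk_ne_one (hn : 3 ≤ n) (j : ℕ) (hj : j < n) (h1 : j ≠ 1) :
    (⟨j, hj⟩ : Fin n) ≠ 1 := by
  intro h
  have := congrArg Fin.val h
  rw [Fin.val_one', Nat.mod_eq_of_lt (show 1 < n by omega)] at this
  exact h1 this

lemma one_ne_zero' (hn : 3 ≤ n) : (1 : Fin n) ≠ 0 := by
  intro h
  have := congrArg Fin.val h
  rw [Fin.val_one', Nat.mod_eq_of_lt (show 1 < n by omega), Fin.val_zero] at this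
  omega

end Ring

/-! ### The protocol -/

section Proto

variable {n D : ℕ} [NeZero n]

def inCW (hn : 3 ≤ n) (i : Fin n) (ℓ : {e // e ∈ biRing n} → Lab D) : ZMod (2 * D) :=
  dec D (ℓ (eCW hn (i - 1)))

def inCCW (hn : 3 ≤ n) (i : Fin n) (ℓ : {e // e ∈ biRing n} → Lab D) : ZMod (2 * D) :=
  dec D (ℓ (eCCW hn i))

def cwVal (i : Fin n) (u v : ZMod (2 * D)) : ZMod (2 * D) :=
  if i = 0 then v + 2 else u + 1

def ccwVal (i : Fin n) (u v : ZMod (2 * D)) : ZMod (2 * D) :=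
  if i = 0 then v + 2 else if i = 1 then u else v + 1

lemma ecw_in (hn : 3 ≤ n) (i : Fin n) : (eCW hn (i - 1)).1.2 = i := by
  show (i - 1) + 1 = i
  exact sub_add_cancel i 1

def Proto (n D : ℕ) [NeZero n] (hn : 3 ≤ n) : StatelessProtocol n (biRing n) (Lab D) where
  react i ℓ _ :=
    (fun e =>
      if e = eCW hn i then enc D (cwVal i (inCW hn i ℓ) (inCCW hn i ℓ))
      else if e = eCCW hn (i - 1) then enc D (ccwVal i (inCW hn i ℓ) (inCCW hn i ℓ))
      else enc D 0, false)
  react_local i ℓ ℓ' x h := by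
    have h1 : ℓ (eCW hn (i - 1)) = ℓ' (eCW hn (i - 1)) := h _ (ecw_in hn i)
    have h2 : ℓ (eCCW hn i) = ℓ' (eCCW hn i) := h _ rfl
    simp only [inCW, inCCW, h1, h2]

def readF (hn : 3 ≤ n) (hD : 1 ≤ D) (i : Fin n) (ℓ : {e // e ∈ biRing n} → Lab D) : Fin D :=
  if i = 0 then g hD (inCCW hn i ℓ + 1) (inCW hn i ℓ)
  else g hD (inCW hn i ℓ) (inCCW hn i ℓ)

end Proto

/-! ### Run analysis -/

section Run

variable {n D : ℕ} [NeZero n]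
variable (hn : 3 ≤ n) (hD : 1 ≤ D) (x : Fin n → Bool) (ℓ0 : {e // e ∈ biRing n} → Lab D)

def LL (t : ℕ) : {e // e ∈ biRing n} → Lab D := (Proto n D hn).syncRun x ℓ0 t

def AA (t : ℕ) : ZMod (2 * D) := dec D (LL hn x ℓ0 t (eCW hn 0))

lemma L_succ (t : ℕ) (e : {e // e ∈ biRing n}) :
    LL hn x ℓ0 (t + 1) e = ((Proto n D hn).react e.1.1 (LL hn x ℓ0 t) (x e.1.1)).1 e := by
  simp [LL, StatelessProtocol.syncRun, StatelessProtocol.run]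

lemma L_cw (j : Fin n) (t : ℕ) :
    LL hn x ℓ0 (t + 1) (eCW hn j) =
      enc D (cwVal j (inCW hn j (LL hn x ℓ0 t)) (inCCW hn j (LL hn x ℓ0 t))) := by
  rw [L_succ]
  show (if eCW hn j = eCW hn j then _ else _) = _
  rw [if_pos rfl]
  rfl

lemma L_ccw (j : Fin n) (t : ℕ) :
    LL hn x ℓ0 (t + 1) (eCCW hn j) =
      enc D (ccwVal (j + 1) (inCW hn (j + 1) (LL hn x ℓ0 t)) (inCCW hn (j + 1) (LL hn x ℓ0 t))) := by
  rw [L_succ]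
  show (if eCCW hn j = eCW hn (j + 1) then _ else
        if eCCW hn j = eCCW hn ((j + 1) - 1) then _ else _) = _
  have hne : eCCW hn j ≠ eCW hn (j + 1) := by
    intro hcontra
    have h2 : j = (j + 1) + 1 := congrArg (fun e => e.1.2) hcontra
    have h3 : (j + 1) - 1 = j := add_sub_cancel_right j 1
    exact cw_ne_ccw hn (j + 1) (h3.symm ▸ h2.symm)
  rw [if_neg hne, add_sub_cancel_right, if_pos rfl]
  rfl

include hD in
lemma E1 (t : ℕ) : LL hn x ℓ0 (t + 1) (eCW hn 0) = enc D (AA hn x ℓ0 (t + 1)) := by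
  conv_rhs => rw [AA, L_cw, dec_enc hD]
  rw [L_cw]

lemma E4 (t : ℕ) (ht : 1 ≤ t) : LL hn x ℓ0 t (eCCW hn 0) = enc D (AA hn x ℓ0 (t - 1)) := by
  obtain ⟨t', rfl⟩ : ∃ t', t = t' + 1 := ⟨t - 1, by omega⟩
  rw [L_ccw, zero_add]
  have h1 : ccwVal (1 : Fin n) (inCW hn 1 (LL hn x ℓ0 t')) (inCCW hn 1 (LL hn x ℓ0 t'))
      = inCW hn 1 (LL hn x ℓ0 t') := by
    rw [ccwVal, if_neg (one_ne_zero' hn), if_pos rfl]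
  rw [h1]
  have h2 : (1 : Fin n) - 1 = 0 := sub_self 1
  rw [inCW, h2]
  simp only [Nat.add_sub_cancel]
  rfl

include hD in
lemma E2 (t : ℕ) : AA hn x ℓ0 (t + 2) = AA hn x ℓ0 t + 2 := by
  show dec D (LL hn x ℓ0 (t + 1 + 1) (eCW hn 0)) = _
  rw [L_cw, dec_enc hD, cwVal, if_pos rfl, inCCW, E4 hn x ℓ0 (t + 1) (by omega),
    dec_enc hD]
  simp only [Nat.add_sub_cancel]

include hD in
include hD in
lemma E3 : ∀ (j : ℕ) (hj : j < n) (t : ℕ), j + 1 ≤ t →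
    LL hn x ℓ0 t (eCW hn ⟨j, hj⟩) = enc D (AA hn x ℓ0 (t - j) + (j : ZMod (2 * D))) := by
  intro j
  induction j with
  | zero =>
    intro hj t ht
    obtain ⟨t', rfl⟩ : ∃ t', t = t' + 1 := ⟨t - 1, by omega⟩
    have h0 : (⟨0, hj⟩ : Fin n) = 0 := rfl
    rw [h0]
    simp only [Nat.sub_zero, Nat.cast_zero, add_zero]
    exact E1 hn hD x ℓ0 t'
  | succ j ih =>
    intro hj t ht
    obtain ⟨t', rfl⟩ : ∃ t', t = t' + 1 := ⟨t - 1, by omega⟩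
    rw [L_cw]
    have hj0 : j < n := by omega
    have hmk : (⟨j, hj0⟩ : Fin n) + 1 = ⟨j + 1, hj⟩ := mk_add_one hn j hj0 hj
    have hne : (⟨j + 1, hj⟩ : Fin n) ≠ 0 := mk_ne_zero hn (j+1) hj (by omega)
    rw [cwVal, if_neg hne, inCW, ← hmk, add_sub_cancel_right,
      ih hj0 t' (by omega), dec_enc hD]
    congr 1
    rw [show t' + 1 - (j + 1) = t' - j by omega]
    push_cast
    ring

include hD in
include hD in
lemma E5 : ∀ (k : ℕ) (hk : k ≤ n - 2) (t : ℕ), k + 2 ≤ t →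
    LL hn x ℓ0 t (eCCW hn ⟨n - 1 - k, by omega⟩) =
      enc D (AA hn x ℓ0 (t - k) + (k : ZMod (2 * D))) := by
  intro k
  induction k with
  | zero =>
    intro hk t ht
    obtain ⟨t', rfl⟩ : ∃ t', t = t' + 1 := ⟨t - 1, by omega⟩
    have h0 : (⟨n - 1 - 0, by omega⟩ : Fin n) = ⟨n - 1, by omega⟩ := rfl
    rw [h0, L_ccw, mk_last_add_one hn]
    rw [ccwVal, if_pos rfl, inCCW, E4 hn x ℓ0 t' (by omega), dec_enc hD]
    simp only [Nat.sub_zero, Nat.cast_zero, add_zero]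
    congr 1
    have := E2 hn hD x ℓ0 (t' - 1)
    rw [show t' - 1 + 2 = t' + 1 by omega] at this
    rw [this]
  | succ k ih =>
    intro hk t ht
    obtain ⟨t', rfl⟩ : ∃ t', t = t' + 1 := ⟨t - 1, by omega⟩
    have hidx : (⟨n - 1 - (k + 1), by omega⟩ : Fin n) = ⟨n - 2 - k, by omega⟩ :=
      Fin.ext (by simp; omega)
    rw [hidx, L_ccw]
    have hmk : (⟨n - 2 - k, by omega⟩ : Fin n) + 1 = ⟨n - 1 - k, by omega⟩ := by
      rw [mk_add_one hn (n - 2 - k) (by omega) (show n - 2 - k + 1 < n by omega)]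
      exact Fin.ext (by simp; omega)
    rw [hmk]
    have hne0 : (⟨n - 1 - k, by omega⟩ : Fin n) ≠ 0 := mk_ne_zero hn (n - 1 - k) (by omega) (by omega)
    have hne1 : (⟨n - 1 - k, by omega⟩ : Fin n) ≠ 1 := mk_ne_one hn (n - 1 - k) (by omega) (by omega)
    rw [ccwVal, if_neg hne0, if_neg hne1, inCCW, ih (by omega) t' (by omega), dec_enc hD]
    congr 1
    rw [show t' + 1 - (k + 1) = t' - k by omega]
    push_cast
    ring

include hD in
include hD in
lemma chain : ∀ s : ℕ,
    AA hn x ℓ0 (2 * s) = AA hn x ℓ0 0 + ((2 * s : ℕ) : ZMod (2 * D)) ∧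
    AA hn x ℓ0 (2 * s + 1) = AA hn x ℓ0 1 + ((2 * s : ℕ) : ZMod (2 * D)) := by
  intro s
  induction s with
  | zero => simp
  | succ s ih =>
    constructor
    · have h := E2 hn hD x ℓ0 (2 * s)
      rw [show 2 * (s + 1) = 2 * s + 2 by omega, h, ih.1]
      push_cast
      ring
    · have h := E2 hn hD x ℓ0 (2 * s + 1)
      rw [show 2 * (s + 1) + 1 = 2 * s + 1 + 2 by omega, h, ih.2]
      push_cast
      ring

def W (t p : ℕ) : ZMod (2 * D) := AA hn x ℓ0 p + ((t - p : ℕ) : ZMod (2 * D))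

include hD in
lemma pair (u w t : ℕ) (h : u + w = t) :
    AA hn x ℓ0 u + ((w : ℕ) : ZMod (2 * D)) = W hn x ℓ0 t (u % 2) := by
  rcases Nat.mod_two_eq_zero_or_one u with hp | hp
  · rw [hp]
    have hu : 2 * (u / 2) = u := by omega
    have h1 := (chain hn hD x ℓ0 (u / 2)).1
    rw [hu] at h1
    rw [h1, W, Nat.sub_zero]
    rw [show (u:ℕ) = u from rfl]
    have : ((u : ℕ) : ZMod (2 * D)) + ((w : ℕ) : ZMod (2 * D)) = ((t : ℕ) : ZMod (2 * D)) := by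
      rw [← Nat.cast_add, h]
    rw [add_assoc, this]
  · rw [hp]
    have hu : 2 * (u / 2) + 1 = u := by omega
    have h1 := (chain hn hD x ℓ0 (u / 2)).2
    rw [hu] at h1
    rw [h1, W]
    have h2 : 2 * (u / 2) = u - 1 := by omega
    rw [h2]
    have : ((u - 1 : ℕ) : ZMod (2 * D)) + ((w : ℕ) : ZMod (2 * D)) = ((t - 1 : ℕ) : ZMod (2 * D)) := by
      rw [← Nat.cast_add, show u - 1 + w = t - 1 by omega]
    rw [add_assoc, this]

include hD in
lemma read_eq (hodd : Odd n) (t : ℕ) (ht : 4 * n ≤ t) (i : Fin n) :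
    readF hn hD i (LL hn x ℓ0 t) = g hD (W hn x ℓ0 t 0) (W hn x ℓ0 t 1) := by
  obtain ⟨w, hw⟩ := hodd
  obtain ⟨j, hj⟩ := i
  rcases Nat.eq_zero_or_pos j with rfl | hj1
  · -- leader
    have h0 : (⟨0, hj⟩ : Fin n) = 0 := rfl
    rw [h0]
    rw [readF, if_pos rfl]
    simp only [inCW, inCCW]
    have h01 : (0 : Fin n) - 1 = ⟨n - 1, by omega⟩ := by
      rw [← mk_last_add_one hn, add_sub_cancel_right]
    rw [h01, E4 hn x ℓ0 t (by omega), dec_enc hD,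
      E3 hn hD x ℓ0 (n - 1) (by omega) t (by omega), dec_enc hD]
    have hp1 := pair hn hD x ℓ0 (t - 1) 1 t (by omega)
    push_cast at hp1
    have hp2 := pair hn hD x ℓ0 (t - (n - 1)) (n - 1) t (by omega)
    rw [hp1, hp2]
    have hpar : (t - 1) % 2 = 0 ∧ (t - (n - 1)) % 2 = 1 ∨
        (t - 1) % 2 = 1 ∧ (t - (n - 1)) % 2 = 0 := by omega
    rcases hpar with ⟨ha, hb⟩ | ⟨ha, hb⟩
    · rw [ha, hb]
    · rw [ha, hb]; exact g_symm hD _ _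
  · -- relay
    have hne : (⟨j, hj⟩ : Fin n) ≠ 0 := mk_ne_zero hn j hj (by omega)
    rw [readF, if_neg hne]
    simp only [inCW, inCCW]
    have hadd : (⟨j - 1, by omega⟩ : Fin n) + 1 = ⟨j, hj⟩ := by
      rw [mk_add_one hn (j - 1) (by omega) (by omega)]
      exact Fin.ext (by simp; omega)
    have hsub : (⟨j, hj⟩ : Fin n) - 1 = ⟨j - 1, by omega⟩ := by
      rw [← hadd, add_sub_cancel_right]
    rw [hsub, E3 hn hD x ℓ0 (j - 1) (by omega) t (by omega), dec_enc hD]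
    have hidx : (⟨n - 1 - (n - 1 - j), by omega⟩ : Fin n) = ⟨j, hj⟩ :=
      Fin.ext (by simp; omega)
    have h5 := E5 hn hD x ℓ0 (n - 1 - j) (by omega) t (by omega)
    rw [hidx] at h5
    rw [h5, dec_enc hD]
    have hp1 := pair hn hD x ℓ0 (t - (j - 1)) (j - 1) t (by omega)
    have hp2 := pair hn hD x ℓ0 (t - (n - 1 - j)) (n - 1 - j) t (by omega)
    rw [hp1, hp2]
    have hpar : (t - (j - 1)) % 2 = 0 ∧ (t - (n - 1 - j)) % 2 = 1 ∨
        (t - (j - 1)) % 2 = 1 ∧ (t - (n - 1 - j)) % 2 = 0 := by omega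
    rcases hpar with ⟨ha, hb⟩ | ⟨ha, hb⟩
    · rw [ha, hb]
    · rw [ha, hb]; exact g_symm hD _ _

lemma Wsucc0 (t : ℕ) : W hn x ℓ0 (t + 1) 0 = W hn x ℓ0 t 0 + 1 := by
  simp only [W, Nat.sub_zero]
  push_cast
  ring

lemma Wsucc1 (t : ℕ) (ht : 1 ≤ t) : W hn x ℓ0 (t + 1) 1 = W hn x ℓ0 t 1 + 1 := by
  simp only [W]
  rw [show t + 1 - 1 = (t - 1) + 1 by omega]
  push_cast
  ring

end Run

end CtrProof

open StatelessProtocol in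
/-- For every odd `n ≥ 3` and `D ≥ 1` there is a stateless
protocol on the bidirectional `n`-ring with label complexity
`2 + 3⌈log₂ D⌉` (reaction functions ignore inputs and outputs) implementing a
`D`-counter: there are readout functions, each depending only on the incoming
labels of its node, such that under the synchronous schedule, from every
initial labeling, from time step `4n` on all nodes read an identical value
`c_t ∈ {0, …, D-1}` with `c_{t+1} = c_t + 1 (mod D)`. -/
theorem exists_D_counter (n D : ℕ) (hn : 3 ≤ n) (hodd : Odd n) (hD : 1 ≤ D) :
    ∃ (P : StatelessProtocol n (biRing n) (Fin (2 ^ (2 + 3 * Nat.clog 2 D))))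
      (read : Fin n →
        ({e // e ∈ biRing n} → Fin (2 ^ (2 + 3 * Nat.clog 2 D))) → Fin D),
      (∀ i ℓ x x', P.react i ℓ x = P.react i ℓ x') ∧
      (∀ i ℓ ℓ', (∀ e : {e // e ∈ biRing n}, e.1.2 = i → ℓ e = ℓ' e) →
        read i ℓ = read i ℓ') ∧
      ∀ (x : Fin n → Bool)
        (ℓ0 : {e // e ∈ biRing n} → Fin (2 ^ (2 + 3 * Nat.clog 2 D))),
        ∃ c : ℕ → Fin D,
          (∀ t, 4 * n ≤ t → ∀ i, read i (P.syncRun x ℓ0 t) = c t) ∧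
          (∀ t, 4 * n ≤ t → ((c (t + 1) : ℕ)) = ((c t : ℕ) + 1) % D) := by
  haveI : NeZero n := ⟨by omega⟩
  refine ⟨CtrProof.Proto n D hn, CtrProof.readF hn hD, fun i ℓ x x' => rfl, ?_, ?_⟩
  · intro i ℓ ℓ' h
    have h1 : ℓ (CtrProof.eCW hn (i - 1)) = ℓ' (CtrProof.eCW hn (i - 1)) :=
      h _ (CtrProof.ecw_in hn i)
    have h2 : ℓ (CtrProof.eCCW hn i) = ℓ' (CtrProof.eCCW hn i) := h _ rfl
    simp only [CtrProof.readF, CtrProof.inCW, CtrProof.inCCW, h1, h2]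
  · intro x ℓ0
    refine ⟨fun t => CtrProof.g hD (CtrProof.W hn x ℓ0 t 0) (CtrProof.W hn x ℓ0 t 1), ?_, ?_⟩
    · intro t ht i
      exact CtrProof.read_eq hn hD x ℓ0 hodd t ht i
    · intro t ht
      show (CtrProof.g hD (CtrProof.W hn x ℓ0 (t + 1) 0) (CtrProof.W hn x ℓ0 (t + 1) 1)).val =
        ((CtrProof.g hD (CtrProof.W hn x ℓ0 t 0) (CtrProof.W hn x ℓ0 t 1)).val + 1) % D
      rw [CtrProof.Wsucc0 hn x ℓ0 t, CtrProof.Wsucc1 hn x ℓ0 t (by omega)]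
      exact CtrProof.g_succ hD _ _
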